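/- Let (G, B) be a biased graph with root v₀, and x : V → [0,1] with x_{v₀} = 0. Suppose B' = (P, C) is a v₀-balloon decomposed as two paths P₁, P₂ from v₀ to a common non-knot vertex v of C covering B'. If there exists a v₀–v path P_v with ℓ_x(P_v) < min(ℓ_x(P₁), ℓ_x(P₂)) which shares a prefix with P and departs from B' at a vertex of the attachment path P, rejoining B' only at v, then there exists a v₀-balloon B'' with w(B'') < w(B'). -/

import Mathlib

open SimpleGraph

/-- The open neighbourhood `N(S)` of a vertex set. -/
def nbhd {V : Type*} (G : SimpleGraph V) (S : Set V) : Set V :=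
  {v | v ∉ S ∧ ∃ u ∈ S, G.Adj u v}

/-- Three internally vertex-disjoint paths between two distinct vertices: a theta graph. -/
def IsTheta {V : Type*} (G : SimpleGraph V) {a b : V} (p1 p2 p3 : G.Walk a b) : Prop :=
  a ≠ b ∧ p1.IsPath ∧ p2.IsPath ∧ p3.IsPath ∧
  (∀ x, x ∈ p1.support → x ∈ p2.support → x = a ∨ x = b) ∧
  (∀ x, x ∈ p1.support → x ∈ p3.support → x = a ∨ x = b) ∧
  (∀ x, x ∈ p2.support → x ∈ p3.support → x = a ∨ x = b)

/-- A class of balanced cycles (given by their edge sets) is linear if whenever two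
balanced cycles form a theta graph, the third cycle of the theta is balanced. -/
def IsLinearClass {V : Type*} (G : SimpleGraph V) (Bal : Set (Sym2 V) → Prop) : Prop :=
  ∀ (a b : V) (p1 p2 p3 : G.Walk a b), IsTheta G p1 p2 p3 →
    Bal {e | e ∈ p1.edges ∨ e ∈ p2.edges} →
    Bal {e | e ∈ p1.edges ∨ e ∈ p3.edges} →
    Bal {e | e ∈ p2.edges ∨ e ∈ p3.edges}

/-- `G[A]` is balanced: every simple cycle with all vertices in `A` is balanced. -/
def BalancedOn {V : Type*} (G : SimpleGraph V) (Bal : Set (Sym2 V) → Prop) (A : Set V) : Prop :=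
  ∀ (u : V) (w : G.Walk u u), w.IsCycle → (∀ y ∈ w.support, y ∈ A) →
    Bal {e | e ∈ w.edges}

/-- Length of a walk under the metric `ℓ_x(uv) = (x_u + x_v)/2`. -/
noncomputable def walkLen {V : Type*} {G : SimpleGraph V} (x : V → ℝ) {u v : V} (w : G.Walk u v) : ℝ :=
  (w.darts.map fun d => (x d.toProd.1 + x d.toProd.2) / 2).sum

/-- A `v₀`-balloon: an unbalanced simple cycle `C` through the knot vertex `t`,
together with a simple path `P` from `v₀` to `t` internally disjoint from `C`. -/
def IsBalloon {V : Type*} (G : SimpleGraph V) (Bal : Set (Sym2 V) → Prop)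
    (v0 t : V) (P : G.Walk v0 t) (C : G.Walk t t) : Prop :=
  P.IsPath ∧ C.IsCycle ∧ ¬ Bal {e | e ∈ C.edges} ∧
  ∀ y, y ∈ P.support → y ∈ C.support → y = t

/-- Balloon weight `w(B) = 2 w(P) + w(C)`: coefficient 2 on path vertices (knot counted
`2·(1/2)+1 = 2` overall), coefficient 1 on the other cycle vertices. -/
noncomputable def balloonWeight {V : Type*} {G : SimpleGraph V} {v0 t : V} (x : V → ℝ)
    (P : G.Walk v0 t) (C : G.Walk t t) : ℝ :=
  2 * ((P.support.map x).sum - x t / 2) + (C.support.tail.map x).sum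

/-- Shortest-path distance from `v₀` under `ℓ_x`. -/
noncomputable def zdist {V : Type*} (G : SimpleGraph V) (x : V → ℝ) (v0 v : V) : ℝ :=
  sInf {r : ℝ | ∃ p : G.Walk v0 v, walkLen x p = r}

/-- Feasibility for the local balloon-covering LP. -/
def LPfeasible {V : Type*} (G : SimpleGraph V) (Bal : Set (Sym2 V) → Prop)
    (v0 : V) (x : V → ℝ) : Prop :=
  (∀ v, 0 ≤ x v) ∧ x v0 = 0 ∧
  ∀ (t : V) (P : G.Walk v0 t) (C : G.Walk t t),
    IsBalloon G Bal v0 t P C → 1 ≤ balloonWeight x P C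

namespace Stmt18

variable {V : Type*} {G : SimpleGraph V}

lemma walkLen_nil (x : V → ℝ) {u : V} : walkLen x (Walk.nil : G.Walk u u) = 0 := by
  simp [walkLen]

lemma walkLen_append (x : V → ℝ) {u v w : V} (p : G.Walk u v) (q : G.Walk v w) :
    walkLen x (p.append q) = walkLen x p + walkLen x q := by
  simp [walkLen, Walk.darts_append]

lemma walkLen_reverse (x : V → ℝ) {u v : V} (p : G.Walk u v) :
    walkLen x p.reverse = walkLen x p := by
  simp only [walkLen, Walk.darts_reverse, List.map_reverse, List.sum_reverse, List.map_map]
  congr 1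
  apply List.map_congr_left
  intro d _
  cases d
  simp [SimpleGraph.Dart.symm]
  ring

lemma walkLen_nonneg (x : V → ℝ) (hx : ∀ v, 0 ≤ x v) {u v : V} (p : G.Walk u v) :
    0 ≤ walkLen x p := by
  apply List.sum_nonneg
  intro r hr
  simp only [List.mem_map] at hr
  obtain ⟨d, _, rfl⟩ := hr
  have := hx d.toProd.1; have := hx d.toProd.2; linarith

lemma support_sum (x : V → ℝ) {u v : V} (p : G.Walk u v) :
    ((p.support.map x).sum) = walkLen x p + (x u + x v) / 2 := by
  induction p with
  | nil => simp [walkLen]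
  | cons h q ih =>
    simp only [Walk.support_cons, List.map_cons, List.sum_cons, ih, walkLen, Walk.darts_cons,
      List.map_cons, List.sum_cons]
    ring

end Stmt18

namespace Stmt18
variable {V : Type*} {G : SimpleGraph V}

lemma balloonWeight_eq (x : V → ℝ) {v0 t : V} (P : G.Walk v0 t) (C : G.Walk t t) :
    balloonWeight x P C = 2 * walkLen x P + x v0 + walkLen x C := by
  have h1 := support_sum x P
  have h2 := support_sum x C
  have h3 : (C.support.map x).sum = x t + (C.support.tail.map x).sum := by
    rw [C.support_eq_cons, List.map_cons, List.sum_cons, List.tail_cons]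
  rw [balloonWeight]
  rw [h3] at h2
  linarith

lemma edge_end_single (x : V → ℝ) {a b : V} (p : G.Walk a b) (hp : p.IsPath)
    (hab : a ≠ b) (he : s(a, b) ∈ p.edges) : walkLen x p = (x a + x b) / 2 := by
  cases p with
  | nil => simp at he
  | cons h q =>
    rename_i c
    rw [Walk.edges_cons, List.mem_cons] at he
    rcases he with he | he
    · have : b = c ∨ a = c ∧ b = a := by
        rw [Sym2.eq_iff] at he
        rcases he with ⟨-, h2⟩ | ⟨h1, h2⟩
        · exact Or.inl h2
        · exact Or.inr ⟨h1, h2⟩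
      rcases this with rfl | ⟨rfl, rfl⟩
      · have : q = Walk.nil := by
          rw [← Walk.isPath_iff_eq_nil]
          exact hp.of_cons
        subst this
        simp [walkLen]
      · exact absurd rfl hab
    · exfalso
      have ha : a ∈ q.support := q.fst_mem_support_of_mem_edges he
      rw [Walk.cons_isPath_iff] at hp
      exact hp.2 ha

end Stmt18

namespace Stmt18
variable {V : Type*} {G : SimpleGraph V}

lemma aux (Bal : Set (Sym2 V) → Prop) (x : V → ℝ)
    {v0 t v u : V}
    (P : G.Walk v0 t) (C : G.Walk t t)
    (hP : P.IsPath) (hC : C.IsCycle)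
    (hPC : ∀ y, y ∈ P.support → y ∈ C.support → y = t)
    (hvt : v ≠ t)
    (Q1 : G.Walk v0 u) (Prest : G.Walk u t) (hpre : P = Q1.append Prest)
    (Q2 : G.Walk u v) (hPv : (Q1.append Q2).IsPath)
    (hdep : ∀ y ∈ Q2.support, (y ∈ P.support ∨ y ∈ C.support) → y = u ∨ y = v)
    (R : G.Walk t v) (hR : R.IsPath)
    (hRsub : ∀ y, y ∈ R.support → y ∈ C.support)
    (hUnbR : ¬ Bal {e | e ∈ R.edges ∨ e ∈ (Prest.reverse.append Q2).edges})
    (hne : walkLen x Q2 < walkLen x Prest + walkLen x R) :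
    IsBalloon G Bal v0 u Q1 (Prest.append (R.append Q2.reverse)) := by
  have hQ1 : Q1.IsPath := hPv.of_append_left
  have hQ2 : Q2.IsPath := hPv.of_append_right
  have hPrest : Prest.IsPath := (hpre ▸ hP).of_append_right
  have hPsup : P.support = Q1.support ++ Prest.support.tail := by
    rw [hpre, Walk.support_append]
  have hPnd : (Q1.support ++ Prest.support.tail).Nodup := hPsup ▸ hP.support_nodup
  rw [List.nodup_append] at hPnd
  have hPvnd : (Q1.support ++ Q2.support.tail).Nodup := by
    have := hPv.support_nodup
    rwa [Walk.support_append] at this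
  rw [List.nodup_append] at hPvnd
  have memP_Q1 : ∀ y, y ∈ Q1.support → y ∈ P.support := by
    intro y hy; rw [hPsup]; exact List.mem_append_left _ hy
  have memP_Prest : ∀ y, y ∈ Prest.support → y ∈ P.support := by
    intro y hy
    rw [Prest.support_eq_cons] at hy
    rcases List.mem_cons.mp hy with rfl | hy
    · exact memP_Q1 _ Q1.end_mem_support
    · rw [hPsup]; exact List.mem_append_right _ hy
  have hvC : v ∈ C.support := hRsub v R.end_mem_support
  have hvP : v ∉ P.support := fun h => hvt (hPC v h hvC)
  have huP : u ∈ P.support := memP_Q1 u Q1.end_mem_support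
  have tRtail : t ∉ R.support.tail := by
    have := hR.support_nodup
    rw [R.support_eq_cons] at this
    exact (List.nodup_cons.mp this).1
  have uPtail : u ∉ Prest.support.tail := by
    have := hPrest.support_nodup
    rw [Prest.support_eq_cons] at this
    exact (List.nodup_cons.mp this).1
  have uQ2tail : u ∉ Q2.support.tail := by
    have := hQ2.support_nodup
    rw [Q2.support_eq_cons] at this
    exact (List.nodup_cons.mp this).1
  have vQ2rtail : v ∉ Q2.reverse.support.tail := by
    have := hQ2.reverse.support_nodup
    rw [Q2.reverse.support_eq_cons] at this
    exact (List.nodup_cons.mp this).1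
  have memQ2_rev : ∀ y, y ∈ Q2.reverse.support.tail → y ∈ Q2.support := by
    intro y hy
    have : y ∈ Q2.reverse.support := List.mem_of_mem_tail hy
    rwa [Walk.support_reverse, List.mem_reverse] at this
  have I1 : ∀ y, y ∈ Prest.support → y ∈ Q2.support → y = u := by
    intro y hy1 hy2
    rcases hdep y hy2 (Or.inl (memP_Prest y hy1)) with h | h
    · exact h
    · exact absurd (memP_Prest y hy1) (h ▸ hvP)
  have I2 : ∀ y, y ∈ R.support → y ∈ Q2.support → y = t ∨ y = v := by
    intro y hy1 hy2
    rcases hdep y hy2 (Or.inr (hRsub y hy1)) with h | h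
    · left; exact h ▸ hPC u huP (hRsub y hy1 |> (h ▸ ·))
    · right; exact h
  have I4 : ∀ y, y ∈ Prest.support → y ∈ R.support → y = t :=
    fun y h1 h2 => hPC y (memP_Prest y h1) (hRsub y h2)
  have I7 : ∀ y, y ∈ Q1.support → y ∈ Q2.support → y = u := by
    intro y hy1 hy2
    rw [Q2.support_eq_cons] at hy2
    rcases List.mem_cons.mp hy2 with rfl | hy2
    · rfl
    · exact absurd hy1 (fun h => hPvnd.2.2 y h y hy2 rfl)
  have I8 : ∀ y, y ∈ Q1.support → y ∈ Prest.support → y = u := by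
    intro y hy1 hy2
    rw [Prest.support_eq_cons] at hy2
    rcases List.mem_cons.mp hy2 with rfl | hy2
    · rfl
    · exact absurd hy1 (fun h => hPnd.2.2 y h y hy2 rfl)
  have hut : t ∈ Q1.support → u = t := by
    intro ht
    have h2 : t ∈ Prest.support := Prest.end_mem_support
    rw [Prest.support_eq_cons] at h2
    rcases List.mem_cons.mp h2 with h2 | h2
    · exact h2.symm
    · exact absurd ht (fun h => hPnd.2.2 t h t h2 rfl)
  have I9 : ∀ y, y ∈ Q1.support → y ∈ C.support → y = u := by
    intro y hy1 hy2
    have hyt : y = t := hPC y (memP_Q1 y hy1) hy2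
    subst hyt
    exact (hut hy1).symm
  -- trail property
  have adjne : ∀ {a b : V} {w1 w2 : V} (p : G.Walk w1 w2), s(a,b) ∈ p.edges → a ≠ b :=
    fun p h => (p.adj_of_mem_edges h).ne
  have dPR : Prest.edges.Disjoint R.edges := by
    intro e he1 he2
    induction e using Sym2.ind with
    | _ a b =>
      have ha := I4 a (Prest.fst_mem_support_of_mem_edges he1) (R.fst_mem_support_of_mem_edges he2)
      have hb := I4 b (Prest.snd_mem_support_of_mem_edges he1) (R.snd_mem_support_of_mem_edges he2)
      exact adjne Prest he1 (ha.trans hb.symm)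
  have dPQ2 : Prest.edges.Disjoint Q2.edges := by
    intro e he1 he2
    induction e using Sym2.ind with
    | _ a b =>
      have ha := I1 a (Prest.fst_mem_support_of_mem_edges he1) (Q2.fst_mem_support_of_mem_edges he2)
      have hb := I1 b (Prest.snd_mem_support_of_mem_edges he1) (Q2.snd_mem_support_of_mem_edges he2)
      exact adjne Prest he1 (ha.trans hb.symm)
  have dRQ2 : R.edges.Disjoint Q2.edges := by
    intro e he1 he2
    induction e using Sym2.ind with
    | _ a b =>
      have hne' : a ≠ b := adjne R he1
      have ha := I2 a (R.fst_mem_support_of_mem_edges he1) (Q2.fst_mem_support_of_mem_edges he2)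
      have hb := I2 b (R.snd_mem_support_of_mem_edges he1) (Q2.snd_mem_support_of_mem_edges he2)
      -- e = s(t, v)
      have hetv : s(a, b) = s(t, v) := by
        rcases ha with rfl | rfl <;> rcases hb with rfl | rfl
        · exact absurd rfl hne'
        · rfl
        · rw [Sym2.eq_swap]
        · exact absurd rfl hne'
      rw [hetv] at he1 he2
      -- u = t
      have htQ2 : t ∈ Q2.support := Q2.fst_mem_support_of_mem_edges he2
      have hut2 : t = u := by
        rcases hdep t htQ2 (Or.inr C.start_mem_support) with h | h
        · exact h
        · exact absurd h.symm hvt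
      subst hut2
      have hPrnil : Prest = Walk.nil := Walk.isPath_iff_eq_nil.mp hPrest
      have h1 : walkLen x R = (x t + x v) / 2 :=
        edge_end_single x R hR (fun h => hvt h.symm) he1
      have h2 : walkLen x Q2 = (x t + x v) / 2 :=
        edge_end_single x Q2 hQ2 (fun h => hvt h.symm) he2
      rw [hPrnil] at hne
      rw [walkLen_nil, h1, h2] at hne
      linarith
  have htrail : (Prest.append (R.append Q2.reverse)).IsTrail := by
    constructor
    rw [Walk.edges_append, Walk.edges_append, Walk.edges_reverse]
    rw [List.nodup_append, List.nodup_append]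
    refine ⟨hPrest.isTrail.edges_nodup,
      ⟨hR.isTrail.edges_nodup, List.nodup_reverse.mpr hQ2.isTrail.edges_nodup, ?_⟩, ?_⟩
    · intro e he1 e' he2 hee; subst hee
      exact dRQ2 he1 (List.mem_reverse.mp he2)
    · intro e he1 e' he2 hee; subst hee
      rcases List.mem_append.mp he2 with h | h
      · exact dPR he1 h
      · exact dPQ2 he1 (List.mem_reverse.mp h)
  -- support decomposition
  have hsupC' : (Prest.append (R.append Q2.reverse)).support
      = Prest.support ++ (R.support.tail ++ Q2.reverse.support.tail) := by
    rw [Walk.support_append, Walk.support_append, R.support_eq_cons]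
    simp
  have hsuptail : (Prest.append (R.append Q2.reverse)).support.tail
      = Prest.support.tail ++ (R.support.tail ++ Q2.reverse.support.tail) := by
    rw [hsupC', Prest.support_eq_cons]
    simp
  have hndtail : (Prest.append (R.append Q2.reverse)).support.tail.Nodup := by
    rw [hsuptail, List.nodup_append, List.nodup_append]
    refine ⟨(List.nodup_cons.mp (Prest.support_eq_cons ▸ hPrest.support_nodup)).2,
      ⟨(List.nodup_cons.mp (R.support_eq_cons ▸ hR.support_nodup)).2,
       (List.nodup_cons.mp (Q2.reverse.support_eq_cons ▸ hQ2.reverse.support_nodup)).2, ?_⟩, ?_⟩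
    · -- R.tail vs Q2rev.tail
      intro y hy1 y' hy2 hyy; subst hyy
      rcases I2 y (List.mem_of_mem_tail hy1) (memQ2_rev y hy2) with rfl | rfl
      · exact tRtail hy1
      · exact vQ2rtail hy2
    · intro y hy1 y' hy2 hyy; subst hyy
      rcases List.mem_append.mp hy2 with h | h
      · have := I4 y (List.mem_of_mem_tail hy1) (List.mem_of_mem_tail h)
        subst this
        exact tRtail h
      · have := I1 y (List.mem_of_mem_tail hy1) (memQ2_rev y h)
        subst this
        exact uPtail hy1
  have hnenil : Prest.append (R.append Q2.reverse) ≠ Walk.nil := by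
    intro h
    have := congrArg Walk.length h
    simp [Walk.length_append] at this
    exact hvt this.2.1.eq.symm
  refine ⟨hQ1, ⟨⟨htrail, hnenil⟩, hndtail⟩, ?_, ?_⟩
  · -- unbalanced
    have hset : {e : Sym2 V | e ∈ (Prest.append (R.append Q2.reverse)).edges}
        = {e | e ∈ R.edges ∨ e ∈ (Prest.reverse.append Q2).edges} := by
      ext e
      simp only [Set.mem_setOf_eq, Walk.edges_append, Walk.edges_reverse, List.mem_append,
        List.mem_reverse]
      tauto
    rw [hset]
    exact hUnbR
  · intro y hy1 hy2
    rw [hsupC'] at hy2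
    rcases List.mem_append.mp hy2 with h | h
    · exact I8 y hy1 h
    · rcases List.mem_append.mp h with h | h
      · exact I9 y hy1 (hRsub y (List.mem_of_mem_tail h))
      · exact I7 y hy1 (memQ2_rev y h)

end Stmt18

open Stmt18 in
/-- if a strictly shorter `v₀`–`v` path departs from the balloon
at a vertex of the attachment path and rejoins it only at `v`, then a strictly
cheaper balloon exists. -/
theorem stmt18 {V : Type*} (G : SimpleGraph V) (Bal : Set (Sym2 V) → Prop)
    (hlin : IsLinearClass G Bal) (v0 t : V) (x : V → ℝ)
    (hx0 : ∀ v, 0 ≤ x v) (hx1 : ∀ v, x v ≤ 1) (hv0 : x v0 = 0)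
    (P : G.Walk v0 t) (C : G.Walk t t) (hB : IsBalloon G Bal v0 t P C)
    (v : V) (hvt : v ≠ t)
    (c1 : G.Walk t v) (c2 : G.Walk v t) (hsplit : C = c1.append c2)
    (u : V) (Q1 : G.Walk v0 u) (Prest : G.Walk u t) (hpre : P = Q1.append Prest)
    (Q2 : G.Walk u v) (hPv : (Q1.append Q2).IsPath)
    (hdep : ∀ y ∈ Q2.support, (y ∈ P.support ∨ y ∈ C.support) → y = u ∨ y = v)
    (hshort1 : walkLen x (Q1.append Q2) < walkLen x (P.append c1))
    (hshort2 : walkLen x (Q1.append Q2) < walkLen x (P.append c2.reverse)) :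
    ∃ (t' : V) (P' : G.Walk v0 t') (C' : G.Walk t' t'),
      IsBalloon G Bal v0 t' P' C' ∧
      balloonWeight x P' C' < balloonWeight x P C := by
  obtain ⟨hP, hC, hUnb, hPC⟩ := hB
  have hQ1 : Q1.IsPath := hPv.of_append_left
  have hQ2 : Q2.IsPath := hPv.of_append_right
  have hPrest : Prest.IsPath := (hpre ▸ hP).of_append_right
  have hPsup : P.support = Q1.support ++ Prest.support.tail := by
    rw [hpre, Walk.support_append]
  have memP_Q1 : ∀ y, y ∈ Q1.support → y ∈ P.support := fun y hy => by
    rw [hPsup]; exact List.mem_append_left _ hy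
  have memP_Prest : ∀ y, y ∈ Prest.support → y ∈ P.support := by
    intro y hy
    rw [Prest.support_eq_cons] at hy
    rcases List.mem_cons.mp hy with rfl | hy
    · exact memP_Q1 _ Q1.end_mem_support
    · rw [hPsup]; exact List.mem_append_right _ hy
  have hCsup : C.support = c1.support ++ c2.support.tail := by
    rw [hsplit, Walk.support_append]
  have hCtail : C.support.tail = c1.support.tail ++ c2.support.tail := by
    have h := hCsup
    rw [C.support_eq_cons, c1.support_eq_cons] at h
    rw [List.cons_append, List.cons.injEq] at h; exact h.2
  have hCnd : (c1.support.tail ++ c2.support.tail).Nodup := hCtail ▸ hC.support_nodup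
  rw [List.nodup_append] at hCnd
  have hvc1 : v ∈ c1.support.tail := by
    have hv := c1.end_mem_support
    rw [c1.support_eq_cons] at hv
    rcases List.mem_cons.mp hv with h | h
    · exact absurd h hvt
    · exact h
  have htc2 : t ∈ c2.support.tail := by
    have h := c2.end_mem_support
    rw [c2.support_eq_cons] at h
    rcases List.mem_cons.mp h with h | h
    · exact absurd h.symm hvt
    · exact h
  have htc1 : t ∉ c1.support.tail := fun h => hCnd.2.2 t h t htc2 rfl
  have hvc2 : v ∉ c2.support.tail := fun h => hCnd.2.2 v hvc1 v h rfl
  have hc1p : c1.IsPath := Walk.IsPath.mk' (by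
    rw [c1.support_eq_cons]; exact List.nodup_cons.mpr ⟨htc1, hCnd.1⟩)
  have hc2p : c2.IsPath := Walk.IsPath.mk' (by
    rw [c2.support_eq_cons]; exact List.nodup_cons.mpr ⟨hvc2, hCnd.2.1⟩)
  have memC_c1 : ∀ y, y ∈ c1.support → y ∈ C.support := fun y hy => by
    rw [hCsup]; exact List.mem_append_left _ hy
  have memC_c2 : ∀ y, y ∈ c2.support → y ∈ C.support := by
    intro y hy
    rw [c2.support_eq_cons] at hy
    rcases List.mem_cons.mp hy with rfl | hy
    · exact memC_c1 _ c1.end_mem_support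
    · rw [hCsup]; exact List.mem_append_right _ hy
  have hvP : v ∉ P.support := fun h => hvt (hPC v h (memC_c1 v c1.end_mem_support))
  have huP : u ∈ P.support := memP_Q1 u Q1.end_mem_support
  have I6 : ∀ y, y ∈ c1.support → y ∈ c2.support → y = t ∨ y = v := by
    intro y h1 h2
    rw [c1.support_eq_cons] at h1
    rcases List.mem_cons.mp h1 with rfl | h1
    · exact Or.inl rfl
    · rw [c2.support_eq_cons] at h2
      rcases List.mem_cons.mp h2 with rfl | h2
      · exact Or.inr rfl
      · exact (hCnd.2.2 y h1 y h2 rfl).elim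
  have uQ2tail : u ∉ Q2.support.tail := by
    have := hQ2.support_nodup
    rw [Q2.support_eq_cons] at this
    exact (List.nodup_cons.mp this).1
  have memQ : ∀ y, y ∈ (Prest.reverse.append Q2).support →
      y ∈ Prest.support ∨ y ∈ Q2.support := by
    intro y hy
    rw [Walk.support_append] at hy
    rcases List.mem_append.mp hy with h | h
    · left; rwa [Walk.support_reverse, List.mem_reverse] at h
    · right; exact List.mem_of_mem_tail h
  have hQpath : (Prest.reverse.append Q2).IsPath := by
    apply Walk.IsPath.mk'
    rw [Walk.support_append, List.nodup_append]
    refine ⟨hPrest.reverse.support_nodup,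
      (List.nodup_cons.mp (Q2.support_eq_cons ▸ hQ2.support_nodup)).2, ?_⟩
    intro y hy1 y' hy2 hyy; subst hyy
    rw [Walk.support_reverse, List.mem_reverse] at hy1
    rcases hdep y (List.mem_of_mem_tail hy2) (Or.inl (memP_Prest y hy1)) with rfl | rfl
    · exact uQ2tail hy2
    · exact hvP (memP_Prest _ hy1)
  have hQc1 : ∀ y, y ∈ (Prest.reverse.append Q2).support → y ∈ c1.support → y = t ∨ y = v := by
    intro y h1 h2
    rcases memQ y h1 with h | h
    · exact Or.inl (hPC y (memP_Prest y h) (memC_c1 y h2))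
    · rcases hdep y h (Or.inr (memC_c1 y h2)) with rfl | rfl
      · exact Or.inl (hPC _ huP (memC_c1 _ h2))
      · exact Or.inr rfl
  have hQc2 : ∀ y, y ∈ (Prest.reverse.append Q2).support → y ∈ c2.reverse.support →
      y = t ∨ y = v := by
    intro y h1 h2
    rw [Walk.support_reverse, List.mem_reverse] at h2
    rcases memQ y h1 with h | h
    · exact Or.inl (hPC y (memP_Prest y h) (memC_c2 y h2))
    · rcases hdep y h (Or.inr (memC_c2 y h2)) with rfl | rfl
      · exact Or.inl (hPC _ huP (memC_c2 _ h2))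
      · exact Or.inr rfl
  have hc12 : ∀ y, y ∈ c1.support → y ∈ c2.reverse.support → y = t ∨ y = v := by
    intro y h1 h2
    rw [Walk.support_reverse, List.mem_reverse] at h2
    exact I6 y h1 h2
  have hS1 : walkLen x Q1 + walkLen x Q2 <
      walkLen x Q1 + walkLen x Prest + walkLen x c1 := by
    have h := hshort1
    simp only [hpre, walkLen_append] at h
    linarith
  have hS2 : walkLen x Q1 + walkLen x Q2 <
      walkLen x Q1 + walkLen x Prest + walkLen x c2 := by
    have h := hshort2
    simp only [hpre, walkLen_append, walkLen_reverse] at h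
    linarith
  by_cases hb1 : Bal {e | e ∈ (Prest.reverse.append Q2).edges ∨ e ∈ c1.edges}
  · by_cases hb2 : Bal {e | e ∈ (Prest.reverse.append Q2).edges ∨ e ∈ c2.reverse.edges}
    · exfalso
      have htheta : IsTheta G (Prest.reverse.append Q2) c1 c2.reverse :=
        ⟨fun h => hvt h.symm, hQpath, hc1p, hc2p.reverse, hQc1, hQc2, hc12⟩
      have hbal := hlin t v (Prest.reverse.append Q2) c1 c2.reverse htheta hb1 hb2
      apply hUnb
      have hset : {e : Sym2 V | e ∈ c1.edges ∨ e ∈ c2.reverse.edges} = {e | e ∈ C.edges} := by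
        ext e
        simp only [Set.mem_setOf_eq, hsplit, Walk.edges_append, Walk.edges_reverse,
          List.mem_append, List.mem_reverse]
      rwa [hset] at hbal
    · -- Case B: the cycle through c2 and the chord path is unbalanced
      have hUnbR : ¬ Bal {e | e ∈ c2.reverse.edges ∨ e ∈ (Prest.reverse.append Q2).edges} := by
        intro h
        apply hb2
        have hset : {e : Sym2 V | e ∈ (Prest.reverse.append Q2).edges ∨ e ∈ c2.reverse.edges}
            = {e | e ∈ c2.reverse.edges ∨ e ∈ (Prest.reverse.append Q2).edges} := by
          ext e; exact or_comm
        rwa [hset]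
      have hneB : walkLen x Q2 < walkLen x Prest + walkLen x c2.reverse := by
        rw [walkLen_reverse]; linarith
      have hbal := aux Bal x P C hP hC hPC hvt Q1 Prest hpre Q2 hPv hdep c2.reverse
        hc2p.reverse
        (fun y hy => memC_c2 y (by rwa [Walk.support_reverse, List.mem_reverse] at hy))
        hUnbR hneB
      refine ⟨u, Q1, _, hbal, ?_⟩
      rw [balloonWeight_eq, balloonWeight_eq]
      simp only [hpre, hsplit, walkLen_append, walkLen_reverse]
      linarith
  · -- Case A: the cycle through c1 and the chord path is unbalanced
    have hUnbR : ¬ Bal {e | e ∈ c1.edges ∨ e ∈ (Prest.reverse.append Q2).edges} := by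
      intro h
      apply hb1
      have hset : {e : Sym2 V | e ∈ (Prest.reverse.append Q2).edges ∨ e ∈ c1.edges}
          = {e | e ∈ c1.edges ∨ e ∈ (Prest.reverse.append Q2).edges} := by
        ext e; exact or_comm
      rwa [hset]
    have hneA : walkLen x Q2 < walkLen x Prest + walkLen x c1 := by linarith
    have hbal := aux Bal x P C hP hC hPC hvt Q1 Prest hpre Q2 hPv hdep c1
      hc1p memC_c1 hUnbR hneA
    refine ⟨u, Q1, _, hbal, ?_⟩
    rw [balloonWeight_eq, balloonWeight_eq]
    simp only [hpre, hsplit, walkLen_append, walkLen_reverse]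
    linarith
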